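/- Let n ≥ 4 be an integer, let M be a finite matroid satisfying the n-th Kinser inequality for every family of n subsets of its ground set, and let N be a minor of M. Then N satisfies the n-th Kinser inequality for every family of n subsets of its ground set. In other words, the Kinser class K_n is minor-closed. -/

import Mathlib

open Finset

universe u v

namespace Matroid

variable {α : Type*}

/-- The rank of a set in a matroid: the cardinality of a largest independent subset. -/
noncomputable def rnk (M : Matroid α) (X : Set α) : ℕ :=
  sSup {n : ℕ | ∃ I, M.Indep I ∧ I ⊆ X ∧ I.ncard = n}

/-- The `n`-th Kinser inequality for the family `X 1, …, X n`. -/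
def KinserIneq (M : Matroid α) (n : ℕ) (X : ℕ → Set α) : Prop :=
  (∑ i ∈ Finset.Icc 3 n, M.rnk (X i)) + M.rnk (X 1 ∪ X 2) + M.rnk (X 1 ∪ X 3 ∪ X n)
      + ∑ i ∈ Finset.Icc 4 n, M.rnk (X 2 ∪ X (i - 1) ∪ X i)
    ≤ M.rnk (X 1 ∪ X 3) + M.rnk (X 1 ∪ X n)
      + (∑ i ∈ Finset.Icc 3 n, M.rnk (X 2 ∪ X i))
      + ∑ i ∈ Finset.Icc 4 n, M.rnk (X (i - 1) ∪ X i)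

/-- `M` lies in the Kinser class `K n`: the `n`-th Kinser inequality holds for every
family of `n` subsets of the ground set. -/
def MemKinserClass (M : Matroid α) (n : ℕ) : Prop :=
  ∀ X : ℕ → Set α, (∀ i ∈ Finset.Icc 1 n, X i ⊆ M.E) → M.KinserIneq n X

/-- `M` is (isomorphic to) the matroid of linear dependence of a family of vectors of a
vector space over `𝔽`. -/
def IsRepOver {α : Type u} (M : Matroid α) (𝔽 : Type v) [Field 𝔽] : Prop :=
  ∃ (W : Type (max u v)) (_ : AddCommGroup W) (_ : Module 𝔽 W) (φ : α → W),
    ∀ I : Set α, M.Indep I ↔ I ⊆ M.E ∧ LinearIndependent 𝔽 (fun x : I => φ x.1)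

/-- Deletion of a set of elements from a matroid. -/
def del (M : Matroid α) (D : Set α) : Matroid α := M ↾ (M.E \ D)

/-- Contraction of a set of elements in a matroid. -/
def con (M : Matroid α) (C : Set α) : Matroid α := (M✶ ↾ (M✶.E \ C))✶

/-- `N` is a minor of `M`: it is obtained from `M` by contractions and deletions. -/
def IsMinorOf (N M : Matroid α) : Prop :=
  ∃ C D : Set α, C ⊆ M.E ∧ D ⊆ M.E ∧ Disjoint C D ∧ N = (M.con C).del D

/-- `N` is a proper minor of `M`: at least one element is deleted or contracted. -/
def IsProperMinorOf (N M : Matroid α) : Prop :=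
  ∃ C D : Set α, C ⊆ M.E ∧ D ⊆ M.E ∧ Disjoint C D ∧ (C ∪ D).Nonempty ∧
    N = (M.con C).del D

/-- A matroid isomorphism: a bijection of ground sets preserving independence. -/
def IsIsoTo {β : Type*} (M : Matroid α) (N : Matroid β) : Prop :=
  ∃ f : α → β, Set.BijOn f M.E N.E ∧ ∀ I ⊆ M.E, (M.Indep I ↔ N.Indep (f '' I))

/-- The Ingleton inequality (the 4th Kinser inequality) for four subsets. -/
def IngletonIneq (M : Matroid α) (X₁ X₂ X₃ X₄ : Set α) : Prop :=
  M.rnk X₃ + M.rnk X₄ + M.rnk (X₁ ∪ X₂) + M.rnk (X₁ ∪ X₃ ∪ X₄) + M.rnk (X₂ ∪ X₃ ∪ X₄)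
    ≤ M.rnk (X₁ ∪ X₃) + M.rnk (X₁ ∪ X₄) + M.rnk (X₂ ∪ X₃) + M.rnk (X₂ ∪ X₄)
      + M.rnk (X₃ ∪ X₄)

end Matroid


namespace Matroid

variable {α : Type*} {M : Matroid α} {B C I J K X Z : Set α}

lemma con_ground' (M : Matroid α) (C : Set α) : (M.con C).E = M.E \ C := rfl

lemma con_base_iff (hC : C ⊆ M.E) :
    (M.con C).IsBase B ↔ ∃ B₀, M.IsBase B₀ ∧ M.IsBasis (B₀ ∩ C) C ∧ B = B₀ \ C := by
  have hSE : M.E \ C ⊆ M✶.E := Set.diff_subset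
  constructor
  · intro hB
    have hBS : B ⊆ M.E \ C := hB.subset_ground
    have hN : (M✶ ↾ (M✶.E \ C)).IsBase ((M.E \ C) \ B) :=
      (dual_isBase_iff (M := M✶ ↾ (M✶.E \ C)) (B := B) hBS).mp hB
    have hbasis : M✶.IsBasis ((M.E \ C) \ B) (M.E \ C) :=
      (isBase_restrict_iff (M := M✶) hSE).mp hN
    obtain ⟨Bd, hBd, hsub⟩ := hbasis.indep.exists_isBase_superset
    have heq : (M.E \ C) \ B = Bd ∩ (M.E \ C) :=
      hbasis.eq_of_subset_indep (hBd.indep.subset Set.inter_subset_left)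
        (Set.subset_inter hsub hbasis.subset) Set.inter_subset_right
    have hdb : M✶.IsBasis (Bd ∩ (M.E \ C)) (M.E \ C) := heq ▸ hbasis
    have key := (hBd.inter_isBasis_iff_compl_inter_isBasis_dual hSE).mp hdb
    rw [dual_dual] at key
    have hcompl : M.E \ (M.E \ C) = C := Set.diff_diff_cancel_left hC
    rw [show M✶.E = M.E from rfl, hcompl] at key
    refine ⟨M.E \ Bd, hBd.compl_isBase_of_dual, key, ?_⟩
    have hBeq : B = (M.E \ C) \ ((M.E \ C) \ B) := (Set.diff_diff_cancel_left hBS).symm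
    rw [hBeq, heq]
    ext x
    simp only [Set.mem_diff, Set.mem_inter_iff]
    tauto
  · rintro ⟨B₀, hB₀, hB₀C, rfl⟩
    have hBsub : B₀ \ C ⊆ M.E \ C := by
      intro x hx; exact ⟨hB₀.subset_ground hx.1, hx.2⟩
    have h := hB₀.compl_inter_isBasis_of_inter_isBasis hB₀C
    have hres : (M✶ ↾ (M✶.E \ C)).IsBase ((M.E \ B₀) ∩ (M.E \ C)) := h.restrict_isBase
    refine (dual_isBase_iff (M := M✶ ↾ (M✶.E \ C)) (B := B₀ \ C) hBsub).mpr ?_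
    have hset : (M✶ ↾ (M✶.E \ C)).E \ (B₀ \ C) = (M.E \ B₀) ∩ (M.E \ C) := by
      show (M.E \ C) \ (B₀ \ C) = _
      ext x
      simp only [Set.mem_diff, Set.mem_inter_iff]
      tauto
    rw [hset]
    exact hres

lemma con_indep_iff (hC : C ⊆ M.E) :
    (M.con C).Indep I ↔ ∃ B₀, M.IsBase B₀ ∧ M.IsBasis (B₀ ∩ C) C ∧ I ⊆ B₀ \ C := by
  constructor
  · intro hI
    obtain ⟨B, hB, hIB⟩ := Matroid.Indep.exists_isBase_superset hI
    obtain ⟨B₀, hB₀, hB₀C, rfl⟩ := (con_base_iff hC).mp hB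
    exact ⟨B₀, hB₀, hB₀C, hIB⟩
  · rintro ⟨B₀, hB₀, hB₀C, hIB⟩
    exact ((con_base_iff hC).mpr ⟨B₀, hB₀, hB₀C, rfl⟩).indep.subset hIB

lemma ncard_le_ncard_of_indep_subset [M.Finite] (hI : M.Indep I) (hIX : I ⊆ X)
    (hJ : M.IsBasis' J X) : I.ncard ≤ J.ncard := by
  obtain ⟨J', hJ', hIJ'⟩ := hI.subset_isBasis'_of_subset hIX
  have hcard : J'.ncard = J.ncard := by
    rw [Set.ncard_def, Set.ncard_def, hJ'.encard_eq_encard hJ]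
  exact hcard ▸ Set.ncard_le_ncard hIJ' (M.set_finite J' hJ'.indep.subset_ground)

lemma rnk_eq_ncard_of_basis' [M.Finite] (hJ : M.IsBasis' J X) : M.rnk X = J.ncard := by
  apply le_antisymm
  · refine csSup_le ⟨0, ∅, M.empty_indep, Set.empty_subset X, by simp⟩ ?_
    rintro n ⟨I, hI, hIX, rfl⟩
    exact ncard_le_ncard_of_indep_subset hI hIX hJ
  · refine le_csSup ⟨M.E.ncard, ?_⟩ ⟨J, hJ.indep, hJ.subset, rfl⟩
    rintro n ⟨I, hI, hIX, rfl⟩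
    exact Set.ncard_le_ncard hI.subset_ground M.ground_finite

lemma rnk_restrict {R : Set α} (hZR : Z ⊆ R) : (M ↾ R).rnk Z = M.rnk Z := by
  unfold rnk
  congr 1
  ext n
  constructor
  · rintro ⟨I, hI, hIZ, rfl⟩
    exact ⟨I, hI.of_restrict, hIZ, rfl⟩
  · rintro ⟨I, hI, hIZ, rfl⟩
    exact ⟨I, hI.indep_restrict_of_subset (hIZ.trans hZR), hIZ, rfl⟩

lemma rnk_con [M.Finite] (hC : C ⊆ M.E) (hZ : Z ⊆ M.E \ C) :
    (M.con C).rnk Z + M.rnk C = M.rnk (Z ∪ C) := by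
  obtain ⟨J, hJ⟩ := M.exists_isBasis C hC
  have hZCE : Z ∪ C ⊆ M.E := Set.union_subset (hZ.trans Set.diff_subset) hC
  obtain ⟨K, hK, hJK⟩ := hJ.indep.subset_isBasis_of_subset
    (hJ.subset.trans Set.subset_union_right) hZCE
  have hKfin : K.Finite := M.set_finite K hK.indep.subset_ground
  have hMC : M.rnk C = J.ncard := rnk_eq_ncard_of_basis' hJ.isBasis'
  have hMZC : M.rnk (Z ∪ C) = K.ncard := rnk_eq_ncard_of_basis' hK.isBasis'
  have hJKcard : (K \ J).ncard + J.ncard = K.ncard :=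
    Set.ncard_diff_add_ncard_of_subset hJK hKfin
  -- the contraction rank of Z equals (K \ J).ncard
  have hcon : (M.con C).rnk Z = (K \ J).ncard := by
    apply le_antisymm
    · refine csSup_le ⟨0, ∅, (M.con C).empty_indep, Set.empty_subset Z, by simp⟩ ?_
      rintro m ⟨I, hI, hIZ, rfl⟩
      obtain ⟨B₀, hB₀, hB₀C, hIB₀⟩ := (con_indep_iff hC).mp hI
      have hIfin : I.Finite := M.ground_finite.subset (hIZ.trans (hZ.trans Set.diff_subset))
      have hB₀Cfin : (B₀ ∩ C).Finite := M.ground_finite.subset (hB₀C.indep.subset_ground)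
      have hdisj : Disjoint I (B₀ ∩ C) := by
        refine Set.disjoint_left.mpr fun x hxI hxBC => ?_
        exact (hIB₀ hxI).2 hxBC.2
      have hind : M.Indep (I ∪ (B₀ ∩ C)) :=
        hB₀.indep.subset (Set.union_subset (hIB₀.trans Set.diff_subset) Set.inter_subset_left)
      have hsubZC : I ∪ (B₀ ∩ C) ⊆ Z ∪ C :=
        Set.union_subset (hIZ.trans Set.subset_union_left)
          (Set.inter_subset_right.trans Set.subset_union_right)
      have hle : (I ∪ (B₀ ∩ C)).ncard ≤ K.ncard :=
        ncard_le_ncard_of_indep_subset hind hsubZC hK.isBasis'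
      rw [Set.ncard_union_eq hdisj hIfin hB₀Cfin] at hle
      have hBCJ : (B₀ ∩ C).ncard = J.ncard := by
        rw [Set.ncard_def, Set.ncard_def, hB₀C.isBasis'.encard_eq_encard hJ.isBasis']
      omega
    · refine le_csSup ⟨M.E.ncard, ?_⟩ ⟨K \ J, ?_, ?_, rfl⟩
      · rintro m ⟨I, hI, hIZ, rfl⟩
        have : I ⊆ M.E := fun x hx => (hI.subset_ground hx).1
        exact Set.ncard_le_ncard this M.ground_finite
      · -- K \ J is independent in the contraction
        obtain ⟨B₀, hB₀, hKB₀⟩ := hK.indep.exists_isBase_superset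
        have hJeq : J = B₀ ∩ C :=
          hJ.eq_of_subset_indep (hB₀.indep.subset Set.inter_subset_left)
            (Set.subset_inter (hJK.trans hKB₀) hJ.subset) Set.inter_subset_right
        have hKC : K ∩ C = J :=
          (hJ.eq_of_subset_indep (hK.indep.subset Set.inter_subset_left)
            (Set.subset_inter hJK hJ.subset) Set.inter_subset_right).symm
        refine (con_indep_iff hC).mpr ⟨B₀, hB₀, hJeq ▸ hJ, fun x hx => ?_⟩
        refine ⟨hKB₀ hx.1, fun hxC => hx.2 ?_⟩
        rw [← hKC]; exact ⟨hx.1, hxC⟩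
      · -- K \ J ⊆ Z
        intro x hx
        have hKC : K ∩ C = J :=
          (hJ.eq_of_subset_indep (hK.indep.subset Set.inter_subset_left)
            (Set.subset_inter hJK hJ.subset) Set.inter_subset_right).symm
        rcases hK.subset hx.1 with h | h
        · exact h
        · exact absurd (hKC ▸ ⟨hx.1, h⟩ : x ∈ J) hx.2
  rw [hcon, hMC, hMZC]
  exact hJKcard

end Matroid


/-- The Kinser class `K n` is minor-closed. -/
theorem Matroid.memKinserClass_of_isMinorOf {α : Type*} {n : ℕ} (hn : 4 ≤ n)
    (M N : Matroid α) [M.Finite] (hM : M.MemKinserClass n) (hNM : N.IsMinorOf M) :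
    N.MemKinserClass n := by
  classical
  obtain ⟨C, D, hC, hD, hCD, rfl⟩ := hNM
  intro X hX
  set N := (M.con C).del D with hN
  have hNE : N.E ⊆ M.E \ C := fun x hx => hx.1
  have key : ∀ Z, Z ⊆ N.E → N.rnk Z + M.rnk C = M.rnk (Z ∪ C) := by
    intro Z hZ
    have h1 : N.rnk Z = (M.con C).rnk Z := rnk_restrict hZ
    rw [h1]
    exact rnk_con hC (hZ.trans hNE)
  have mem : ∀ i, 1 ≤ i → i ≤ n → i ∈ Finset.Icc 1 n := fun i h1 h2 => Finset.mem_Icc.mpr ⟨h1, h2⟩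
  have hXN : ∀ i, 1 ≤ i → i ≤ n → X i ⊆ N.E := fun i h1 h2 => hX i (mem i h1 h2)
  have hXE : ∀ i ∈ Finset.Icc 1 n, X i ∪ C ⊆ M.E := by
    intro i hi
    exact Set.union_subset (fun x hx => (hX i hi hx).1.1) hC
  have hK := hM (fun i => X i ∪ C) hXE
  unfold KinserIneq at hK ⊢
  simp only at hK
  have keyU : ∀ Z₁ Z₂ : Set α, Z₁ ⊆ N.E → Z₂ ⊆ N.E →
      M.rnk ((Z₁ ∪ C) ∪ (Z₂ ∪ C)) = N.rnk (Z₁ ∪ Z₂) + M.rnk C := by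
    intro Z₁ Z₂ h1 h2
    have hset : (Z₁ ∪ C) ∪ (Z₂ ∪ C) = (Z₁ ∪ Z₂) ∪ C := by
      ext x; simp only [Set.mem_union]; tauto
    rw [hset, ← key _ (Set.union_subset h1 h2)]
  have keyU3 : ∀ Z₁ Z₂ Z₃ : Set α, Z₁ ⊆ N.E → Z₂ ⊆ N.E → Z₃ ⊆ N.E →
      M.rnk ((Z₁ ∪ C) ∪ (Z₂ ∪ C) ∪ (Z₃ ∪ C)) = N.rnk (Z₁ ∪ Z₂ ∪ Z₃) + M.rnk C := by
    intro Z₁ Z₂ Z₃ h1 h2 h3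
    have hset : (Z₁ ∪ C) ∪ (Z₂ ∪ C) ∪ (Z₃ ∪ C) = (Z₁ ∪ Z₂ ∪ Z₃) ∪ C := by
      ext x; simp only [Set.mem_union]; tauto
    rw [hset, ← key _ (Set.union_subset (Set.union_subset h1 h2) h3)]
  have e1 : ∑ i ∈ Finset.Icc 3 n, M.rnk (X i ∪ C)
      = (∑ i ∈ Finset.Icc 3 n, N.rnk (X i)) + (Finset.Icc 3 n).card * M.rnk C := by
    have hcong : ∀ i ∈ Finset.Icc 3 n, M.rnk (X i ∪ C) = N.rnk (X i) + M.rnk C := by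
      intro i hi
      obtain ⟨h1, h2⟩ := Finset.mem_Icc.mp hi
      exact (key _ (hXN i (by omega) h2)).symm
    rw [Finset.sum_congr rfl hcong, Finset.sum_add_distrib, Finset.sum_const, smul_eq_mul]
  have e2 : ∑ i ∈ Finset.Icc 4 n, M.rnk ((X 2 ∪ C) ∪ (X (i - 1) ∪ C) ∪ (X i ∪ C))
      = (∑ i ∈ Finset.Icc 4 n, N.rnk (X 2 ∪ X (i - 1) ∪ X i))
        + (Finset.Icc 4 n).card * M.rnk C := by
    have hcong : ∀ i ∈ Finset.Icc 4 n, M.rnk ((X 2 ∪ C) ∪ (X (i - 1) ∪ C) ∪ (X i ∪ C))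
        = N.rnk (X 2 ∪ X (i - 1) ∪ X i) + M.rnk C := by
      intro i hi
      obtain ⟨h1, h2⟩ := Finset.mem_Icc.mp hi
      exact keyU3 _ _ _ (hXN 2 (by omega) (by omega)) (hXN (i - 1) (by omega) (by omega))
        (hXN i (by omega) h2)
    rw [Finset.sum_congr rfl hcong, Finset.sum_add_distrib, Finset.sum_const, smul_eq_mul]
  have e3 : ∑ i ∈ Finset.Icc 3 n, M.rnk ((X 2 ∪ C) ∪ (X i ∪ C))
      = (∑ i ∈ Finset.Icc 3 n, N.rnk (X 2 ∪ X i)) + (Finset.Icc 3 n).card * M.rnk C := by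
    have hcong : ∀ i ∈ Finset.Icc 3 n, M.rnk ((X 2 ∪ C) ∪ (X i ∪ C))
        = N.rnk (X 2 ∪ X i) + M.rnk C := by
      intro i hi
      obtain ⟨h1, h2⟩ := Finset.mem_Icc.mp hi
      exact keyU _ _ (hXN 2 (by omega) (by omega)) (hXN i (by omega) h2)
    rw [Finset.sum_congr rfl hcong, Finset.sum_add_distrib, Finset.sum_const, smul_eq_mul]
  have e4 : ∑ i ∈ Finset.Icc 4 n, M.rnk ((X (i - 1) ∪ C) ∪ (X i ∪ C))
      = (∑ i ∈ Finset.Icc 4 n, N.rnk (X (i - 1) ∪ X i))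
        + (Finset.Icc 4 n).card * M.rnk C := by
    have hcong : ∀ i ∈ Finset.Icc 4 n, M.rnk ((X (i - 1) ∪ C) ∪ (X i ∪ C))
        = N.rnk (X (i - 1) ∪ X i) + M.rnk C := by
      intro i hi
      obtain ⟨h1, h2⟩ := Finset.mem_Icc.mp hi
      exact keyU _ _ (hXN (i - 1) (by omega) (by omega)) (hXN i (by omega) h2)
    rw [Finset.sum_congr rfl hcong, Finset.sum_add_distrib, Finset.sum_const, smul_eq_mul]
  rw [e1, e2, e3, e4, keyU _ _ (hXN 1 (by omega) (by omega)) (hXN 2 (by omega) (by omega)),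
    keyU3 _ _ _ (hXN 1 (by omega) (by omega)) (hXN 3 (by omega) (by omega))
      (hXN n (by omega) (by omega)),
    keyU _ _ (hXN 1 (by omega) (by omega)) (hXN 3 (by omega) (by omega)),
    keyU _ _ (hXN 1 (by omega) (by omega)) (hXN n (by omega) (by omega))] at hK
  linarith
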